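/- Assume that for every t > 0 the map z ↦ f(t,z)/z is nonincreasing on (0,∞). Let u and v be strictly positive classical solutions of ∂_t u = Δu + f(t,u) on (0,∞)×ℝ^N. Then the function w := u + v is a supersolution: it satisfies ∂_t w ≥ Δw + f(t,w) pointwise on (0,∞)×ℝ^N. -/

import Mathlib

/-- The Laplacian of a function on Euclidean space, as the sum of second partial
derivatives in the coordinate directions. -/
noncomputable def laplacian {N : ℕ} (φ : EuclideanSpace ℝ (Fin N) → ℝ)
    (x : EuclideanSpace ℝ (Fin N)) : ℝ :=
  ∑ i : Fin N, fderiv ℝ (fun y => fderiv ℝ φ y (EuclideanSpace.single i (1:ℝ))) x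
    (EuclideanSpace.single i (1:ℝ))

lemma laplacian_add {N : ℕ} {φ ψ : EuclideanSpace ℝ (Fin N) → ℝ}
    (hφ : ContDiff ℝ 2 φ) (hψ : ContDiff ℝ 2 ψ) (x : EuclideanSpace ℝ (Fin N)) :
    laplacian (fun y => φ y + ψ y) x = laplacian φ x + laplacian ψ x := by
  unfold laplacian
  rw [← Finset.sum_add_distrib]
  refine Finset.sum_congr rfl fun i _ => ?_
  set e := EuclideanSpace.single i (1:ℝ)
  have hφ1 : Differentiable ℝ φ := hφ.differentiable (by norm_num)
  have hψ1 : Differentiable ℝ ψ := hψ.differentiable (by norm_num)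
  have hfd : (fun y => fderiv ℝ (fun z => φ z + ψ z) y e)
      = fun y => fderiv ℝ φ y e + fderiv ℝ ψ y e := by
    funext y
    rw [fderiv_fun_add (hφ1 y) (hψ1 y)]
    rfl
  rw [hfd]
  have hφ' : ContDiff ℝ 1 (fderiv ℝ φ) := (contDiff_succ_iff_fderiv.mp (show ContDiff ℝ (1+1) φ by norm_num; exact hφ)).2.2
  have hψ' : ContDiff ℝ 1 (fderiv ℝ ψ) := (contDiff_succ_iff_fderiv.mp (show ContDiff ℝ (1+1) ψ by norm_num; exact hψ)).2.2
  have hφe : DifferentiableAt ℝ (fun y => fderiv ℝ φ y e) x :=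
    ((ContinuousLinearMap.apply ℝ ℝ e).differentiable.comp
      (hφ'.differentiable one_ne_zero)) x
  have hψe : DifferentiableAt ℝ (fun y => fderiv ℝ ψ y e) x :=
    ((ContinuousLinearMap.apply ℝ ℝ e).differentiable.comp
      (hψ'.differentiable one_ne_zero)) x
  rw [fderiv_fun_add hφe hψe]
  rfl

/-- If `z ↦ f(t,z)/z` is nonincreasing on `(0,∞)` for every `t > 0`, then
the sum `w = u + v` of two strictly positive classical solutions of `∂ₜu = Δu + f(t,u)`
is a supersolution: `∂ₜw ≥ Δw + f(t,w)` pointwise on `(0,∞) × ℝᴺ`. -/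
theorem sum_of_solutions_is_supersolution
    {N : ℕ} (hN : 0 < N) (f : ℝ → ℝ → ℝ)
    (hconc : ∀ t > (0:ℝ), AntitoneOn (fun z => f t z / z) (Set.Ioi (0:ℝ)))
    (u v : ℝ → EuclideanSpace ℝ (Fin N) → ℝ)
    (hut : ∀ x, ∀ t > (0:ℝ), DifferentiableAt ℝ (fun s => u s x) t)
    (hux : ∀ t > (0:ℝ), ContDiff ℝ 2 (u t))
    (hueq : ∀ t > (0:ℝ), ∀ x, deriv (fun s => u s x) t = laplacian (u t) x + f t (u t x))
    (hupos : ∀ t > (0:ℝ), ∀ x, 0 < u t x)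
    (hvt : ∀ x, ∀ t > (0:ℝ), DifferentiableAt ℝ (fun s => v s x) t)
    (hvx : ∀ t > (0:ℝ), ContDiff ℝ 2 (v t))
    (hveq : ∀ t > (0:ℝ), ∀ x, deriv (fun s => v s x) t = laplacian (v t) x + f t (v t x))
    (hvpos : ∀ t > (0:ℝ), ∀ x, 0 < v t x) :
    ∀ t > (0:ℝ), ∀ x,
      laplacian (fun y => u t y + v t y) x + f t (u t x + v t x)
        ≤ deriv (fun s => u s x + v s x) t := by
  intro t ht x
  have hlap : laplacian (fun y => u t y + v t y) x
      = laplacian (u t) x + laplacian (v t) x :=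
    laplacian_add (hux t ht) (hvx t ht) x
  have hderiv : deriv (fun s => u s x + v s x) t
      = deriv (fun s => u s x) t + deriv (fun s => v s x) t :=
    deriv_fun_add (hut x t ht) (hvt x t ht)
  rw [hlap, hderiv, hueq t ht x, hveq t ht x]
  have hf : f t (u t x + v t x) ≤ f t (u t x) + f t (v t x) := by
    set a := u t x with ha
    set b := v t x with hb
    have hap : 0 < a := hupos t ht x
    have hbp : 0 < b := hvpos t ht x
    have habp : 0 < a + b := by linarith
    have h1 : f t (a + b) / (a + b) ≤ f t a / a :=
      hconc t ht hap habp (by linarith)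
    have h2 : f t (a + b) / (a + b) ≤ f t b / b :=
      hconc t ht hbp habp (by linarith)
    have key : f t (a + b) = a * (f t (a + b) / (a + b)) + b * (f t (a + b) / (a + b)) := by
      field_simp
    calc f t (a + b) = a * (f t (a + b) / (a + b)) + b * (f t (a + b) / (a + b)) := key
      _ ≤ a * (f t a / a) + b * (f t b / b) := by
          gcongr
      _ = f t a + f t b := by
          field_simp
  linarith
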